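/- Let h be a feed-forward ReLU network with J ≥ 3 layers and let X ⊆ ℝ^{n_x}. Suppose layer j (with 1 ≤ j ≤ J−2) is stably active on X, i.e., for every x ∈ X the pre-activation satisfies (W^(j) x^(j−1) + b^(j))_i ≥ 0 for all i = 1,…,n_j. Then for every x ∈ X, ReLU(W^(j+1)·ReLU(W^(j) x^(j−1) + b^(j)) + b^(j+1)) = ReLU(W' x^(j−1) + b'), where W' = W^(j+1)·W^(j) and b' = W^(j+1)·b^(j) + b^(j+1); consequently the network obtained by merging layers j and j+1 into the single layer (W', b') computes the same function as h on X. -/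
import Mathlib


/-- The affine map `x ↦ W x + b` of a layer with input width `m`
(vectors encoded as functions `ℕ → ℝ`, only the first `m` coordinates are read). -/
noncomputable def affineLayer (m : ℕ) (W : ℕ → ℕ → ℝ) (b : ℕ → ℝ) (x : ℕ → ℝ) : ℕ → ℝ :=
  fun i => (∑ k ∈ Finset.range m, W i k * x k) + b i

/-- Layer outputs of a feed-forward ReLU network: `x^(0) = x` and
`x^(j) = ReLU(W^(j) x^(j-1) + b^(j))` componentwise (0-based weight indices:
the weights of paper-layer `j` are `W (j-1)`, `b (j-1)`). -/
noncomputable def layerOut (n : ℕ → ℕ) (W : ℕ → ℕ → ℕ → ℝ) (b : ℕ → ℕ → ℝ)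
    (x : ℕ → ℝ) : ℕ → ℕ → ℝ
  | 0 => x
  | j + 1 => fun i => max 0 (affineLayer (n j) (W j) (b j) (layerOut n W b x j) i)

/-- Output of a feed-forward ReLU network with `J` layers: the last layer is affine,
`h(x) = W^(J) x^(J-1) + b^(J)`. -/
noncomputable def netOut (J : ℕ) (n : ℕ → ℕ) (W : ℕ → ℕ → ℕ → ℝ) (b : ℕ → ℕ → ℝ)
    (x : ℕ → ℝ) : ℕ → ℝ :=
  affineLayer (n (J - 1)) (W (J - 1)) (b (J - 1)) (layerOut n W b x (J - 1))

/-- Exact compression of a stably active layer: if layer `j` (with `1 ≤ j ≤ J-2`) of a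
`J`-layer ReLU network is stably active on `X`, then for every `x ∈ X`,
`ReLU(W^(j+1)·ReLU(W^(j) x^(j-1) + b^(j)) + b^(j+1)) = ReLU(W' x^(j-1) + b')` with
`W' = W^(j+1)·W^(j)` and `b' = W^(j+1)·b^(j) + b^(j+1)`, and consequently the
`(J-1)`-layer network obtained by merging layers `j` and `j+1` into the single layer
`(W', b')` computes the same function as the original network on `X`. -/
lemma merge_eq (m p : ℕ) (W1 : ℕ → ℕ → ℝ) (b1 : ℕ → ℝ) (W2 : ℕ → ℕ → ℝ) (b2 : ℕ → ℝ)
    (y : ℕ → ℝ) (h : ∀ l < p, 0 ≤ affineLayer m W1 b1 y l) (i : ℕ) :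
    affineLayer p W2 b2 (fun k => max 0 (affineLayer m W1 b1 y k)) i
      = affineLayer m (fun i' k' => ∑ l ∈ Finset.range p, W2 i' l * W1 l k')
          (fun i' => (∑ l ∈ Finset.range p, W2 i' l * b1 l) + b2 i') y i := by
  show (∑ l ∈ Finset.range p, W2 i l * max 0 (affineLayer m W1 b1 y l)) + b2 i = _
  have step1 : ∀ l ∈ Finset.range p,
      W2 i l * max 0 (affineLayer m W1 b1 y l)
        = (∑ k ∈ Finset.range m, W2 i l * W1 l k * y k) + W2 i l * b1 l := by
    intro l hl
    rw [max_eq_right (h l (Finset.mem_range.mp hl))]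
    show W2 i l * ((∑ k ∈ Finset.range m, W1 l k * y k) + b1 l) = _
    rw [mul_add, Finset.mul_sum]
    ring_nf
  rw [Finset.sum_congr rfl step1, Finset.sum_add_distrib, Finset.sum_comm]
  show (∑ k ∈ Finset.range m, ∑ l ∈ Finset.range p, W2 i l * W1 l k * y k)
      + (∑ l ∈ Finset.range p, W2 i l * b1 l) + b2 i
    = (∑ k ∈ Finset.range m, (∑ l ∈ Finset.range p, W2 i l * W1 l k) * y k)
      + ((∑ l ∈ Finset.range p, W2 i l * b1 l) + b2 i)
  rw [add_assoc]
  congr 1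
  exact Finset.sum_congr rfl fun k _ => (Finset.sum_mul _ _ _).symm

theorem merge_stably_active_layer (J : ℕ) (hJ : 3 ≤ J) (n : ℕ → ℕ)
    (W : ℕ → ℕ → ℕ → ℝ) (b : ℕ → ℕ → ℝ) (X : Set (ℕ → ℝ))
    (j : ℕ) (hj1 : 1 ≤ j) (hj2 : j ≤ J - 2)
    (hstable : ∀ x ∈ X, ∀ i < n j,
      0 ≤ affineLayer (n (j - 1)) (W (j - 1)) (b (j - 1)) (layerOut n W b x (j - 1)) i) :
    (∀ x ∈ X, ∀ i < n (j + 1),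
      max 0 (affineLayer (n j) (W j) (b j)
          (fun k => max 0
            (affineLayer (n (j - 1)) (W (j - 1)) (b (j - 1)) (layerOut n W b x (j - 1)) k)) i)
        = max 0 (affineLayer (n (j - 1))
            (fun i' k' => ∑ l ∈ Finset.range (n j), W j i' l * W (j - 1) l k')
            (fun i' => (∑ l ∈ Finset.range (n j), W j i' l * b (j - 1) l) + b j i')
            (layerOut n W b x (j - 1)) i)) ∧
    (∀ x ∈ X, ∀ i < n J,
      netOut (J - 1)
          (fun k => if k < j then n k else n (k + 1))
          (fun k =>
            if k < j - 1 then W k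
            else if k = j - 1 then
              fun i' k' => ∑ l ∈ Finset.range (n j), W j i' l * W (j - 1) l k'
            else W (k + 1))
          (fun k =>
            if k < j - 1 then b k
            else if k = j - 1 then
              fun i' => (∑ l ∈ Finset.range (n j), W j i' l * b (j - 1) l) + b j i'
            else b (k + 1))
          x i
        = netOut J n W b x i) := by


  have hJ2 : j + 2 <= J := by omega
  obtain ⟨j', rfl⟩ : ∃ j', j = j' + 1 := ⟨j - 1, by omega⟩
  constructor
  · intro x hx i _
    have := merge_eq (n j') (n (j' + 1)) (W j') (b j') (W (j' + 1)) (b (j' + 1))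
      (layerOut n W b x j') (by simpa using hstable x hx) i
    simp only [Nat.add_sub_cancel] at *
    rw [this]
  · intro x hx i _
    set n' : ℕ → ℕ := fun k => if k < j' + 1 then n k else n (k + 1) with hn'
    set W' : ℕ → ℕ → ℕ → ℝ := fun k =>
      if k < j' + 1 - 1 then W k
      else if k = j' + 1 - 1 then
        fun i' k' => ∑ l ∈ Finset.range (n (j' + 1)), W (j' + 1) i' l * W (j' + 1 - 1) l k'
      else W (k + 1) with hW'
    set b' : ℕ → ℕ → ℝ := fun k =>
      if k < j' + 1 - 1 then b k
      else if k = j' + 1 - 1 then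
        fun i' => (∑ l ∈ Finset.range (n (j' + 1)), W (j' + 1) i' l * b (j' + 1 - 1) l)
          + b (j' + 1) i'
      else b (k + 1) with hb'
    have en1 : ∀ k, k < j' + 1 → n' k = n k := by
      intro k h; simp only [hn']; rw [if_pos h]
    have en2 : ∀ k, j' + 1 ≤ k → n' k = n (k + 1) := by
      intro k h; simp only [hn']; rw [if_neg (by omega)]
    have eW1 : ∀ k, k < j' → W' k = W k := by
      intro k h; simp only [hW']; rw [if_pos (by omega)]
    have eb1 : ∀ k, k < j' → b' k = b k := by
      intro k h; simp only [hb']; rw [if_pos (by omega)]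
    have eWj : W' j' = fun i' k' =>
        ∑ l ∈ Finset.range (n (j' + 1)), W (j' + 1) i' l * W j' l k' := by
      simp only [hW']; rw [if_neg (by omega : ¬ j' < j' + 1 - 1), if_pos (by omega : j' = j' + 1 - 1)]; rfl
    have ebj : b' j' = fun i' =>
        (∑ l ∈ Finset.range (n (j' + 1)), W (j' + 1) i' l * b j' l) + b (j' + 1) i' := by
      simp only [hb']; rw [if_neg (by omega : ¬ j' < j' + 1 - 1), if_pos (by omega : j' = j' + 1 - 1)]; rfl
    have eW2 : ∀ k, j' + 1 ≤ k → W' k = W (k + 1) := by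
      intro k h; simp only [hW']; rw [if_neg (by omega), if_neg (by omega)]
    have eb2 : ∀ k, j' + 1 ≤ k → b' k = b (k + 1) := by
      intro k h; simp only [hb']; rw [if_neg (by omega), if_neg (by omega)]
    have hlow : ∀ k, k ≤ j' → layerOut n' W' b' x k = layerOut n W b x k := by
      intro k
      induction k with
      | zero => intro _; rfl
      | succ k ih =>
        intro hk
        funext i'
        show max 0 (affineLayer (n' k) (W' k) (b' k) (layerOut n' W' b' x k) i') = _
        rw [en1 k (by omega), eW1 k (by omega), eb1 k (by omega), ih (by omega)]
        rfl
    have hj : layerOut n' W' b' x (j' + 1) = layerOut n W b x (j' + 2) := by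
      funext i'
      show max 0 (affineLayer (n' j') (W' j') (b' j') (layerOut n' W' b' x j') i') = _
      rw [en1 j' (Nat.lt_succ_self j'), eWj, ebj, hlow j' le_rfl]
      have := merge_eq (n j') (n (j' + 1)) (W j') (b j') (W (j' + 1)) (b (j' + 1))
        (layerOut n W b x j') (by simpa using hstable x hx) i'
      rw [← this]
      rfl
    have hhigh : ∀ k, j' + 1 ≤ k → layerOut n' W' b' x k = layerOut n W b x (k + 1) := by
      intro k
      induction k with
      | zero => omega
      | succ k ih =>
        intro hk
        rcases Nat.lt_or_ge k (j' + 1) with h | h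
        · have : k = j' := by omega
          subst this
          exact hj
        · funext i'
          show max 0 (affineLayer (n' k) (W' k) (b' k) (layerOut n' W' b' x k) i') = _
          rw [en2 k h, eW2 k h, eb2 k h, ih h]
          rfl
    show affineLayer (n' (J - 1 - 1)) (W' (J - 1 - 1)) (b' (J - 1 - 1))
        (layerOut n' W' b' x (J - 1 - 1)) i = _
    have hk : j' + 1 ≤ J - 2 := by omega
    have hJ12 : J - 1 - 1 = J - 2 := by omega
    have h1 : J - 2 + 1 = J - 1 := by omega
    rw [hJ12, en2 (J - 2) hk, eW2 (J - 2) hk, eb2 (J - 2) hk, hhigh (J - 2) hk, h1]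
    rfl
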